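/- Let A be a symmetric real n×n matrix that is negative semi-definite and Δt > 0 with Δt·‖A‖ < 1 (operator norm). Then I − Δt·A is invertible, and for any U ∈ ℝ^n, the vector V = (I − Δt·A)^{-1} U satisfies VᵀAV ≥ UᵀAU, i.e., the implicit Euler step for u' = Au does not decrease the (nonpositive) quadratic form VᵀAV; equivalently E(V) ≤ E(U) where E(W) = −WᵀAW ≥ 0. -/

import Mathlib

open Matrix

theorem stmt_14 {n : ℕ} (A : Matrix (Fin n) (Fin n) ℝ)
    (hsymm : A.IsSymm) (hnsd : (-A).PosSemidef)
    (Δt : ℝ) (hΔt : 0 < Δt)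
    (hnorm : Δt * ‖Matrix.toEuclideanCLM (𝕜 := ℝ) A‖ < 1) :
    IsUnit ((1 : Matrix (Fin n) (Fin n) ℝ) - Δt • A) ∧
      ∀ U : Fin n → ℝ,
        U ⬝ᵥ A.mulVec U ≤
          (((1 : Matrix (Fin n) (Fin n) ℝ) - Δt • A)⁻¹.mulVec U) ⬝ᵥ
            A.mulVec (((1 : Matrix (Fin n) (Fin n) ℝ) - Δt • A)⁻¹.mulVec U) := by
  set M : Matrix (Fin n) (Fin n) ℝ := (1 : Matrix (Fin n) (Fin n) ℝ) - Δt • A with hM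
  have hAh : A.IsHermitian := by simpa using hnsd.1.neg
  have hMh : M.IsHermitian := by
    rw [hM, Matrix.IsHermitian, conjTranspose_sub, conjTranspose_smul, conjTranspose_one,
      hAh.eq, star_trivial]
  have hMpd : M.PosDef := by
    refine Matrix.PosDef.of_dotProduct_mulVec_pos hMh (fun x hx => ?_)
    have hxx : 0 < x ⬝ᵥ x := by
      have h0 : 0 ≤ x ⬝ᵥ x := Finset.sum_nonneg fun i _ => mul_self_nonneg _
      rcases h0.lt_or_eq with h | h
      · exact h
      · exact absurd ((dotProduct_self_eq_zero).1 h.symm) hx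
    have hAx : 0 ≤ -(x ⬝ᵥ A.mulVec x) := by
      have := hnsd.dotProduct_mulVec_nonneg x
      simpa [Matrix.neg_mulVec] using this
    have : x ⬝ᵥ M.mulVec x = x ⬝ᵥ x - Δt * (x ⬝ᵥ A.mulVec x) := by
      simp [hM, Matrix.sub_mulVec, Matrix.smul_mulVec, dotProduct_sub,
        dotProduct_smul, smul_eq_mul]
    simp only [star_trivial]
    rw [this]
    nlinarith
  have hdet : IsUnit M.det := isUnit_iff_ne_zero.2 (ne_of_gt hMpd.det_pos)
  have hunit : IsUnit M := (Matrix.isUnit_iff_isUnit_det M).2 hdet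
  refine ⟨hunit, fun U => ?_⟩
  set V : Fin n → ℝ := M⁻¹.mulVec U with hV
  have hMV : M.mulVec V = U := by
    rw [hV, Matrix.mulVec_mulVec, Matrix.mul_nonsing_inv M hdet, Matrix.one_mulVec]
  set w : Fin n → ℝ := A.mulVec V with hw
  have hU : U = V - Δt • w := by
    rw [← hMV, hM]
    simp [Matrix.sub_mulVec, Matrix.smul_mulVec, hw]
  have h1 : V ⬝ᵥ A.mulVec w = w ⬝ᵥ w := by
    rw [Matrix.dotProduct_mulVec]
    congr 1
    rw [hw]
    conv_lhs => rw [← hsymm]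
    exact Matrix.vecMul_transpose A V
  have h2 : (0:ℝ) ≤ w ⬝ᵥ w := Finset.sum_nonneg fun i _ => mul_self_nonneg _
  have h3 : w ⬝ᵥ A.mulVec w ≤ 0 := by
    have := hnsd.dotProduct_mulVec_nonneg w
    simp only [Matrix.neg_mulVec, dotProduct_neg, star_trivial] at this
    linarith
  have hexp : U ⬝ᵥ A.mulVec U
      = V ⬝ᵥ w - Δt * (V ⬝ᵥ A.mulVec w) - Δt * (w ⬝ᵥ w)
        + Δt * (Δt * (w ⬝ᵥ A.mulVec w)) := by
    rw [hU]
    simp [Matrix.mulVec_sub, Matrix.mulVec_smul, sub_dotProduct, dotProduct_sub,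
      smul_dotProduct, dotProduct_smul, smul_eq_mul, ← hw]
    ring
  have hVAV : V ⬝ᵥ A.mulVec V = V ⬝ᵥ w := by rw [hw]
  rw [hexp, hVAV, h1]
  nlinarith [mul_nonneg hΔt.le h2, mul_nonneg (mul_nonneg hΔt.le hΔt.le) (neg_nonneg.2 h3)]
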